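/- If a connected undirected graph G has the property that every simple path in G has length at most K, then G admits a tree decomposition whose width is at most K and whose depth is at most K. -/

import Mathlib

structure RTree where
  U : Type
  fin : Fintype U
  root : U
  parent : U → U
  parent_root : parent root = root
  depth : U → ℕ
  depth_root : depth root = 0
  depth_succ : ∀ u, u ≠ root → depth u = depth (parent u) + 1

/-- `t.Anc u w` : `w` is an ancestor of `u` (or `u` itself). -/
def RTree.Anc (t : RTree) : t.U → t.U → Prop :=
  Relation.ReflTransGen (fun a b => b = t.parent a ∧ a ≠ t.root)

/-- The set `S` of tree nodes induces a connected subtree. -/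
def SubtreeConnected (t : RTree) (S : Set t.U) : Prop :=
  ∃ top ∈ S, ∀ u ∈ S, t.Anc u top ∧ ∀ w, t.Anc u w → t.Anc w top → w ∈ S

def IsTreeDecomp {V : Type} (G : SimpleGraph V) (t : RTree) (θ : t.U → Set V) : Prop :=
  (∀ v, ∃ u, v ∈ θ u) ∧
  (∀ v w, G.Adj v w → ∃ u, v ∈ θ u ∧ w ∈ θ u) ∧
  (∀ v, SubtreeConnected t {u | v ∈ θ u})

section Aux

variable {V : Type}

/-- Reachability within a set `S`. -/
def Reach (G : SimpleGraph V) (S : Set V) : V → V → Prop :=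
  Relation.ReflTransGen (fun a b => G.Adj a b ∧ a ∈ S ∧ b ∈ S)

/-- Ancestor relation for a parent function `p` with root `r`. -/
def Anc (p : V → V) (r : V) : V → V → Prop :=
  Relation.ReflTransGen (fun a b => b = p a ∧ a ≠ r)

variable {G : SimpleGraph V}

lemma reach_symm {S : Set V} {a b : V} (h : Reach G S a b) : Reach G S b a :=
  by
    haveI : Std.Symm (fun a b : V => G.Adj a b ∧ a ∈ S ∧ b ∈ S) :=
      ⟨fun _ _ h => ⟨h.1.symm, h.2.2, h.2.1⟩⟩
    exact (Relation.ReflTransGen.symmetric).symm _ _ h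

/-- The connected component of `v` inside `S`. -/
def comp (G : SimpleGraph V) (S : Set V) (v : V) : Set V := {w | w ∈ S ∧ Reach G S v w}

lemma mem_comp_self {S : Set V} {v : V} (hv : v ∈ S) : v ∈ comp G S v :=
  ⟨hv, Relation.ReflTransGen.refl⟩

lemma comp_eq {S : Set V} {v w : V} (hw : w ∈ comp G S v) : comp G S w = comp G S v := by
  ext x
  constructor
  · rintro ⟨hx, hr⟩; exact ⟨hx, hw.2.trans hr⟩
  · rintro ⟨hx, hr⟩; exact ⟨hx, (reach_symm hw.2).trans hr⟩

lemma reach_comp {S : Set V} {v : V} (hv : v ∈ S) :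
    ∀ w, Reach G S v w → w ∈ comp G S v ∧ Reach G (comp G S v) v w := by
  intro w h
  induction h with
  | refl => exact ⟨mem_comp_self hv, Relation.ReflTransGen.refl⟩
  | tail h' step ih =>
    have hb : _ ∈ comp G S v := ⟨step.2.2, ih.1.2.tail step⟩
    exact ⟨hb, ih.2.tail ⟨step.1, ih.1, hb⟩⟩

lemma anc_root {S : Set V} {p : V → V} {d : V → ℕ} {r : V}
    (hP2 : ∀ v ∈ S, v ≠ r → p v ∈ S ∧ d v = d (p v) + 1) :
    ∀ n, ∀ v ∈ S, d v ≤ n → Anc p r v r := by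
  intro n
  induction n with
  | zero =>
    intro v hv hd
    by_cases hvr : v = r
    · subst hvr; exact Relation.ReflTransGen.refl
    · exfalso; have := (hP2 v hv hvr).2; omega
  | succ n ih =>
    intro v hv hd
    by_cases hvr : v = r
    · subst hvr; exact Relation.ReflTransGen.refl
    · obtain ⟨hpS, hdv⟩ := hP2 v hv hvr
      exact (ih (p v) hpS (by omega)).head ⟨rfl, hvr⟩

/-- The key DFS/elimination-tree construction, by strong induction on the size of `S`. -/
lemma dfs (G : SimpleGraph V) :
    ∀ (n : ℕ) (S : Set V), S.Finite → S.ncard ≤ n → ∀ r, r ∈ S →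
      (∀ v ∈ S, Reach G S r v) →
      ∃ (p : V → V) (d : V → ℕ), p r = r ∧ d r = 0 ∧
        (∀ v ∈ S, v ≠ r → p v ∈ S ∧ G.Adj v (p v) ∧ d v = d (p v) + 1) ∧
        (∀ v ∈ S, ∀ w ∈ S, G.Adj v w → Anc p r v w ∨ Anc p r w v) := by
  intro n
  induction n with
  | zero =>
    intro S hfin hcard r hr _
    exfalso
    have h0 : S.ncard = 0 := le_antisymm hcard (Nat.zero_le _)
    rw [Set.ncard_eq_zero hfin] at h0
    subst h0
    exact hr
  | succ n ih =>
    intro S hfin hcard r hr hreach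
    classical
    have hNe : Nonempty V := ⟨r⟩
    by_cases hTall : ∀ v ∈ S, v = r
    · refine ⟨id, fun _ => 0, rfl, rfl, ?_, ?_⟩
      · intro v hv hvr; exact absurd (hTall v hv) hvr
      · intro v hv w hw hadj
        rw [hTall v hv, hTall w hw] at hadj
        exact absurd hadj (G.irrefl)
    · set T : Set V := S \ {r} with hTdef
      have hrT : r ∉ T := fun h => h.2 rfl
      have hTsub : T ⊆ S := Set.diff_subset
      have hTfin : T.Finite := hfin.subset hTsub
      -- every component of T contains a neighbour of r
      have hroot : ∀ v ∈ T, ∃ c ∈ comp G T v, G.Adj r c := by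
        intro v hv
        have hvr : Reach G S v r := reach_symm (hreach v hv.1)
        have claim : ∀ a, Reach G S a r → a ∈ T → ∃ c ∈ comp G T a, G.Adj r c := by
          intro a h
          refine Relation.ReflTransGen.head_induction_on h ?_ ?_
          · intro ha; exact absurd rfl ha.2
          · intro a b step hbr ihb ha
            by_cases hb : b = r
            · subst hb
              exact ⟨a, mem_comp_self ha, step.1.symm⟩
            · have hbT : b ∈ T := ⟨step.2.2, hb⟩
              obtain ⟨c, hc, hcr⟩ := ihb hbT
              exact ⟨c, ⟨hc.1, Relation.ReflTransGen.head ⟨step.1, ha, hbT⟩ hc.2⟩, hcr⟩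
        exact claim v hvr hv
      -- recursive construction on each component
      have hex : ∀ C : Set V, (∃ v ∈ T, C = comp G T v) →
          ∃ (c : V) (pc : V → V) (dc : V → ℕ),
            c ∈ C ∧ G.Adj r c ∧ pc c = c ∧ dc c = 0 ∧
            (∀ v ∈ C, v ≠ c → pc v ∈ C ∧ G.Adj v (pc v) ∧ dc v = dc (pc v) + 1) ∧
            (∀ v ∈ C, ∀ w ∈ C, G.Adj v w → Anc pc c v w ∨ Anc pc c w v) := by
        rintro C ⟨v, hv, rfl⟩
        obtain ⟨c, hcC, hrc⟩ := hroot v hv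
        have hcT : c ∈ T := hcC.1
        have hCv : comp G T c = comp G T v := comp_eq hcC
        have hreachC : ∀ w ∈ comp G T v, Reach G (comp G T v) c w := by
          intro w hw
          have h1 : Reach G T c w := (reach_symm hcC.2).trans hw.2
          have h2 := (reach_comp hcT w h1).2
          rwa [hCv] at h2
        have hsub : comp G T v ⊆ T := fun x hx => hx.1
        have hCfin := hTfin.subset hsub
        have hcard' : (comp G T v).ncard ≤ n := by
          have h1 : (comp G T v).ncard ≤ T.ncard := Set.ncard_le_ncard hsub hTfin
          have h2 : T.ncard = S.ncard - 1 := Set.ncard_diff_singleton_of_mem hr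
          omega
        obtain ⟨pc, dc, h1, h2, h3, h4⟩ := ih (comp G T v) hCfin hcard' c hcC hreachC
        exact ⟨c, pc, dc, hcC, hrc, h1, h2, h3, h4⟩
      choose! c pc dc hc1 hc2 hc3 hc4 hc5 hc6 using hex
      set p : V → V := fun v =>
        if v ∈ T then (if v = c (comp G T v) then r else pc (comp G T v) v) else v with hp
      set d : V → ℕ := fun v => if v ∈ T then dc (comp G T v) v + 1 else 0 with hd
      have hpr : p r = r := by rw [hp]; simp only [if_neg hrT]
      have hdr : d r = 0 := by rw [hd]; simp only [if_neg hrT]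
      have hpT : ∀ v ∈ T, v ≠ c (comp G T v) → p v = pc (comp G T v) v := by
        intro v hv h; rw [hp]; simp only [if_pos hv, if_neg h]
      have hpc : ∀ v ∈ T, v = c (comp G T v) → p v = r := by
        intro v hv h; rw [hp]; simp only [if_pos hv, if_pos h]
      have hdT : ∀ v ∈ T, d v = dc (comp G T v) v + 1 := by
        intro v hv; rw [hd]; simp only [if_pos hv]
      have hP2 : ∀ v ∈ S, v ≠ r → p v ∈ S ∧ G.Adj v (p v) ∧ d v = d (p v) + 1 := by
        intro v hvS hvr
        have hvT : v ∈ T := ⟨hvS, hvr⟩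
        have hCex : ∃ v' ∈ T, comp G T v = comp G T v' := ⟨v, hvT, rfl⟩
        by_cases hvc : v = c (comp G T v)
        · have hpv : p v = r := hpc v hvT hvc
          have hCC : comp G T (c (comp G T v)) = comp G T v := comp_eq (hc1 _ hCex)
          refine ⟨hpv ▸ hr, ?_, ?_⟩
          · rw [hpv, hvc]; exact (hc2 _ hCex).symm
          · rw [hdT v hvT, hpv, hdr]
            rw [hvc, hCC, hc4 _ hCex]
        · obtain ⟨hpvC, hadj, hdd⟩ := hc5 _ hCex v (mem_comp_self hvT) hvc
          have hpv : p v = pc (comp G T v) v := hpT v hvT hvc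
          have hpvC' : p v ∈ comp G T v := hpv ▸ hpvC
          have hpvT : p v ∈ T := hpvC'.1
          have hCC : comp G T (p v) = comp G T v := comp_eq hpvC'
          refine ⟨hTsub hpvT, hpv ▸ hadj, ?_⟩
          · rw [hdT v hvT, hdT (p v) hpvT, hCC, hpv, hdd]
      have hP2' : ∀ v ∈ S, v ≠ r → p v ∈ S ∧ d v = d (p v) + 1 :=
        fun v h h' => ⟨(hP2 v h h').1, (hP2 v h h').2.2⟩
      -- transfer ancestry in a component to global ancestry
      have transfer : ∀ C : Set V, (∃ v' ∈ T, C = comp G T v') →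
          ∀ a ∈ C, ∀ b, Anc (pc C) (c C) a b → Anc p r a b := by
        rintro C hCex a ha b hab
        suffices h : b ∈ C ∧ Anc p r a b from h.2
        obtain ⟨v', hv', hC⟩ := hCex
        have hCsub : C ⊆ T := by rw [hC]; exact fun x hx => hx.1
        induction hab with
        | refl => exact ⟨ha, Relation.ReflTransGen.refl⟩
        | @tail b1 b2 h' step ih =>
          obtain ⟨hb1C, hanc⟩ := ih
          obtain ⟨heq, hne⟩ := step
          have h5 := hc5 C ⟨v', hv', hC⟩ b1 hb1C hne
          have hb1T := hCsub hb1C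
          have hCb1 : comp G T b1 = C := by
            rw [hC]; exact comp_eq (hC ▸ hb1C)
          have hne' : b1 ≠ c (comp G T b1) := by rw [hCb1]; exact hne
          have hpb1 : p b1 = pc C b1 := by rw [hpT b1 hb1T hne', hCb1]
          refine ⟨heq ▸ h5.1, hanc.tail ⟨?_, fun h => hrT (h ▸ hb1T)⟩⟩
          rw [heq, hpb1]
      have hP3 : ∀ v ∈ S, ∀ w ∈ S, G.Adj v w → Anc p r v w ∨ Anc p r w v := by
        intro v hvS w hwS hadj
        by_cases hvr : v = r
        · subst hvr
          exact Or.inr (anc_root hP2' (d w) w hwS le_rfl)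
        · by_cases hwr : w = r
          · subst hwr
            exact Or.inl (anc_root hP2' (d v) v hvS le_rfl)
          · have hvT : v ∈ T := ⟨hvS, hvr⟩
            have hwT : w ∈ T := ⟨hwS, hwr⟩
            have hwC : w ∈ comp G T v :=
              ⟨hwT, Relation.ReflTransGen.single ⟨hadj, hvT, hwT⟩⟩
            have hCex : ∃ v' ∈ T, comp G T v = comp G T v' := ⟨v, hvT, rfl⟩
            rcases hc6 _ hCex v (mem_comp_self hvT) w hwC hadj with h | h
            · exact Or.inl (transfer _ hCex v (mem_comp_self hvT) w h)
            · exact Or.inr (transfer _ hCex w hwC v h)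
      exact ⟨p, d, hpr, hdr, hP2, hP3⟩

end Aux

/-- If every simple path of a connected graph `G` has length at most `K`, then `G` admits a
tree decomposition of width at most `K` and depth at most `K`. -/
theorem stmt0 {V : Type} [Fintype V] (G : SimpleGraph V) (K : ℕ)
    (hconn : G.Connected)
    (hpath : ∀ ⦃u v : V⦄ (p : G.Walk u v), p.IsPath → p.length ≤ K) :
    ∃ (t : RTree) (θ : t.U → Set V),
      IsTreeDecomp G t θ ∧ (∀ u, t.depth u ≤ K) ∧ (∀ u, (θ u).ncard ≤ K + 1) := by
  classical
  obtain ⟨r⟩ := hconn.nonempty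
  have walkreach : ∀ {a b : V} (w : G.Walk a b), Reach G Set.univ a b := by
    intro a b w
    induction w with
    | nil => exact Relation.ReflTransGen.refl
    | cons h q ih => exact Relation.ReflTransGen.head ⟨h, trivial, trivial⟩ ih
  have hreach : ∀ v ∈ (Set.univ : Set V), Reach G Set.univ r v := by
    intro v _
    obtain ⟨w⟩ := hconn.preconnected r v
    exact walkreach w
  obtain ⟨p, d, hpr, hdr, hP2, hP3⟩ :=
    dfs G (Fintype.card V) Set.univ Set.finite_univ
      (by simp [Set.ncard_univ, Nat.card_eq_fintype_card]) r trivial hreach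
  have hd0 : ∀ v, d v = 0 → v = r := by
    intro v h
    by_contra hv
    have := (hP2 v trivial hv).2.2
    omega
  -- a simple path of length `d v` from `v` to `r`
  have hpathex : ∀ m v, d v ≤ m →
      ∃ w : G.Walk v r, w.IsPath ∧ w.length = d v ∧ ∀ x ∈ w.support, d x ≤ d v := by
    intro m
    induction m with
    | zero =>
      intro v h
      have hv : v = r := hd0 v (le_antisymm h (Nat.zero_le _))
      subst hv
      exact ⟨SimpleGraph.Walk.nil, SimpleGraph.Walk.IsPath.nil, by simp [hdr], by simp [hdr]⟩
    | succ m ihm =>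
      intro v h
      by_cases hv : v = r
      · subst hv
        exact ⟨SimpleGraph.Walk.nil, SimpleGraph.Walk.IsPath.nil, by simp [hdr], by simp [hdr]⟩
      · obtain ⟨_, hadj, hdv⟩ := hP2 v trivial hv
        obtain ⟨w', hw1, hw2, hw3⟩ := ihm (p v) (by omega)
        have hvns : v ∉ w'.support := fun hx => by have := hw3 v hx; omega
        refine ⟨SimpleGraph.Walk.cons hadj w', hw1.cons hvns, ?_, ?_⟩
        · simp [hw2, hdv]
        · intro x hx
          rw [SimpleGraph.Walk.support_cons] at hx
          rcases List.mem_cons.mp hx with rfl | hx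
          · exact le_rfl
          · exact (hw3 x hx).trans (by omega)
  have hdle : ∀ u, d u ≤ K := by
    intro u
    obtain ⟨w, hw1, hw2, _⟩ := hpathex (d u) u le_rfl
    rw [← hw2]
    exact hpath w hw1
  have hancit : ∀ u w, Anc p r u w → ∃ k, w = p^[k] u ∧ d w + k = d u := by
    intro u w h
    induction h with
    | refl => exact ⟨0, rfl, by simp⟩
    | @tail b1 b2 h' step ih =>
      obtain ⟨k, hk, hdk⟩ := ih
      obtain ⟨heq, hne⟩ := step
      have hdstep := (hP2 b1 trivial hne).2.2
      have heqd : d b2 = d (p b1) := by rw [heq]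
      exact ⟨k + 1, by rw [heq, hk, Function.iterate_succ_apply'], by omega⟩
  refine ⟨⟨V, inferInstance, r, p, hpr, d, hdr, fun u hu => (hP2 u trivial hu).2.2⟩,
    fun u => {v | Anc p r u v}, ⟨?_, ?_, ?_⟩, ?_, ?_⟩
  · intro v
    exact ⟨v, Relation.ReflTransGen.refl⟩
  · intro v w hadj
    rcases hP3 v trivial w trivial hadj with h | h
    · exact ⟨v, Relation.ReflTransGen.refl, h⟩
    · exact ⟨w, h, Relation.ReflTransGen.refl⟩
  · intro v
    refine ⟨v, Relation.ReflTransGen.refl, ?_⟩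
    intro u hu
    exact ⟨hu, fun w _ h2 => h2⟩
  · intro u
    exact hdle u
  · intro u
    show {v | Anc p r u v}.ncard ≤ K + 1
    have hsub : {v | Anc p r u v} ⊆ ↑((Finset.range (d u + 1)).image fun k => p^[k] u) := by
      intro w hw
      obtain ⟨k, hk, hdk⟩ := hancit u w hw
      simp only [Finset.coe_image, Finset.coe_range, Set.mem_image, Set.mem_Iio]
      exact ⟨k, by omega, hk.symm⟩
    have h1 := Set.ncard_le_ncard hsub (Finset.finite_toSet _)
    rw [Set.ncard_coe_finset] at h1
    have h2 : ((Finset.range (d u + 1)).image fun k => p^[k] u).card ≤ d u + 1 :=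
      le_trans Finset.card_image_le (by simp)
    have h3 := hdle u
    omega
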